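/- Let f : ℝ₊ → ℝ₊ be nondecreasing with F(t) = ∫₀ᵗ f(s)ds, and let N ≥ 3 be an integer. Suppose y is a C² nonnegative nondecreasing function on a neighborhood of [r₀, r₁], 0 < r₀ < r₁ < ∞, satisfying y''(r) + ((N−1)/r)·y'(r) ≥ f(y(r)) and F(y(r₀)) > 0. Then ∫_{y(r₀)}^{y(r₁)} du/√(2(F(u) − F(y(r₀)))) ≥ (r₀/(N−2))·(1 − r₀^{N−2}/r₁^{N−2}). -/

import Mathlib

open MeasureTheory
open scoped ENNReal

section Aux
open intervalIntegral Set

lemma Fint' {f : ℝ → ℝ} (hfmono : MonotoneOn f (Set.Ici 0)) {v u : ℝ} (hv : 0 ≤ v) (hu : 0 ≤ u) :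
    IntervalIntegrable f volume v u := by
  apply MonotoneOn.intervalIntegrable
  exact hfmono.mono ((Set.uIcc_subset_Icc ⟨hv, le_max_left v u⟩ ⟨hu, le_max_right v u⟩).trans
    Set.Icc_subset_Ici_self)

lemma Fsub' {f F : ℝ → ℝ} (hfmono : MonotoneOn f (Set.Ici 0))
    (hF : ∀ t, F t = ∫ s in (0:ℝ)..t, f s) {v u : ℝ} (hv : 0 ≤ v) (hu : 0 ≤ u) :
    F u - F v = ∫ s in v..u, f s := by
  rw [hF u, hF v]
  exact integral_interval_sub_left (Fint' hfmono le_rfl hu) (Fint' hfmono le_rfl hv)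

lemma Flb' {f F : ℝ → ℝ} (hfmono : MonotoneOn f (Set.Ici 0))
    (hF : ∀ t, F t = ∫ s in (0:ℝ)..t, f s) {v u : ℝ} (hv : 0 ≤ v) (hvu : v ≤ u) :
    f v * (u - v) ≤ F u - F v := by
  rw [Fsub' hfmono hF hv (hv.trans hvu)]
  have h : f v * (u - v) = ∫ _ in v..u, f v := by simp [mul_comm]
  rw [h]
  apply intervalIntegral.integral_mono_on hvu (by simp) (Fint' hfmono hv (hv.trans hvu))
  intro x hx
  exact hfmono hv (hv.trans hx.1) hx.1

lemma Fub' {f F : ℝ → ℝ} (hfmono : MonotoneOn f (Set.Ici 0))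
    (hF : ∀ t, F t = ∫ s in (0:ℝ)..t, f s) {v u : ℝ} (hv : 0 ≤ v) (hvu : v ≤ u) :
    F u - F v ≤ f u * (u - v) := by
  rw [Fsub' hfmono hF hv (hv.trans hvu)]
  have h : f u * (u - v) = ∫ _ in v..u, f u := by simp [mul_comm]
  rw [h]
  apply intervalIntegral.integral_mono_on hvu (Fint' hfmono hv (hv.trans hvu)) (by simp)
  intro x hx
  exact hfmono (hv.trans hx.1) (hv.trans hvu) hx.2

lemma Fmono' {f F : ℝ → ℝ} (hfpos : ∀ t, 0 ≤ t → 0 ≤ f t) (hfmono : MonotoneOn f (Set.Ici 0))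
    (hF : ∀ t, F t = ∫ s in (0:ℝ)..t, f s) {v u : ℝ} (hv : 0 ≤ v) (hvu : v ≤ u) : F v ≤ F u := by
  nlinarith [Flb' hfmono hF hv hvu, hfpos v hv]

lemma FcontAt' {f F : ℝ → ℝ} (hfpos : ∀ t, 0 ≤ t → 0 ≤ f t) (hfmono : MonotoneOn f (Set.Ici 0))
    (hF : ∀ t, F t = ∫ s in (0:ℝ)..t, f s) {u : ℝ} (hu : 0 < u) : ContinuousAt F u := by
  have hL : LipschitzOnWith (Real.toNNReal (f (u + 1))) F (Set.Icc 0 (u + 1)) := by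
    rw [lipschitzOnWith_iff_dist_le_mul]
    have key : ∀ p ∈ Set.Icc (0:ℝ) (u+1), ∀ q ∈ Set.Icc (0:ℝ) (u+1), q ≤ p →
        dist (F p) (F q) ≤ (Real.toNNReal (f (u + 1)) : ℝ) * dist p q := by
      intro p hp q hq h
      rw [Real.dist_eq, Real.dist_eq, abs_of_nonneg (sub_nonneg.2 h),
        abs_of_nonneg (sub_nonneg.2 (Fmono' hfpos hfmono hF hq.1 h))]
      have h1 := Fub' hfmono hF hq.1 h
      have h2 : f p ≤ f (u + 1) := hfmono (Set.mem_Ici.2 (hq.1.trans h)) (Set.mem_Ici.2 (by positivity)) hp.2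
      have h3 : (Real.toNNReal (f (u + 1)) : ℝ) = f (u + 1) :=
        Real.coe_toNNReal _ (hfpos _ (by positivity))
      rw [h3]
      nlinarith
    intro p hp q hq
    rcases le_total q p with h | h
    · exact key p hp q hq h
    · rw [dist_comm (F p), dist_comm p]; exact key q hq p hp h
  exact hL.continuousOn.continuousAt (Icc_mem_nhds (by linarith) (by linarith))

lemma Flim' {F : ℝ → ℝ} (hFc : ∀ x : ℝ, 0 < x → ContinuousAt F x) {c : ℝ} (hc : 0 < c) :
    Filter.Tendsto (fun h => (∫ x in (c - h)..c, F x) / h) (nhdsWithin 0 (Set.Ioi 0))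
      (nhds (F c)) := by
  have hFO : ContinuousOn F (Set.Ioi 0) := fun x hx => (hFc x hx).continuousWithinAt
  have hFI : ∀ {p q : ℝ}, 0 < p → 0 < q → IntervalIntegrable F volume p q := by
    intro p q hp hq
    apply ContinuousOn.intervalIntegrable
    apply hFO.mono
    intro x hx
    exact lt_of_lt_of_le (lt_min hp hq) (by simpa using hx.1)
  set A : ℝ → ℝ := fun x => ∫ z in (c/2)..x, F z with hA_def
  have hA : HasDerivAt A (F c) c := by
    apply intervalIntegral.integral_hasDerivAt_right (hFI (by linarith) hc)
    · exact ContinuousOn.stronglyMeasurableAtFilter isOpen_Ioi hFO c hc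
    · exact hFc c hc
  have hslope := hasDerivAt_iff_tendsto_slope.mp hA
  have hmap : Filter.Tendsto (fun h : ℝ => c - h) (nhdsWithin 0 (Set.Ioi 0))
      (nhdsWithin c {c}ᶜ) := by
    rw [tendsto_nhdsWithin_iff]
    constructor
    · have : Filter.Tendsto (fun h : ℝ => c - h) (nhds 0) (nhds (c - 0)) :=
        (continuous_const.sub continuous_id).tendsto 0
      simpa using this.mono_left nhdsWithin_le_nhds
    · filter_upwards [self_mem_nhdsWithin] with h (hh : (0:ℝ) < h)
      simp only [Set.mem_compl_iff, Set.mem_singleton_iff]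
      intro hcc
      linarith [sub_eq_self.mp hcc]
  have hcomp := hslope.comp hmap
  apply hcomp.congr'
  filter_upwards [Ioo_mem_nhdsGT_of_mem (Set.left_mem_Ico.2 (by linarith : (0:ℝ) < c/2))]
    with h hh
  obtain ⟨hh0, hhc⟩ := hh
  have hch : 0 < c - h := by linarith
  have hsub : A c - A (c - h) = ∫ x in (c - h)..c, F x :=
    intervalIntegral.integral_interval_sub_left (hFI (by linarith) hc) (hFI (by linarith) hch)
  show slope A c (c - h) = _
  rw [slope_def_field, ← hsub]
  have : c - h - c = -h := by ring
  rw [this]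
  rw [show A (c - h) - A c = -(A c - A (c - h)) by ring, neg_div, div_neg, neg_neg]

lemma moll' {f F y g : ℝ → ℝ} (hfpos : ∀ t, 0 ≤ t → 0 ≤ f t)
    (hfmono : MonotoneOn f (Set.Ici 0)) (hF : ∀ t, F t = ∫ s in (0:ℝ)..t, f s)
    {s t : ℝ} (hst : s ≤ t) (hys : 0 < y s)
    (hyd : ∀ u ∈ Set.uIcc s t, HasDerivAt y (g u) u)
    (hg : ContinuousOn g (Set.uIcc s t))
    (hgpos : ∀ u ∈ Set.uIcc s t, 0 ≤ g u) :
    F (y t) - F (y s) ≤ ∫ u in s..t, g u * f (y u) := by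
  have hFc : ∀ x : ℝ, 0 < x → ContinuousAt F x := fun x hx => FcontAt' hfpos hfmono hF hx
  have hFI : ∀ {p q : ℝ}, 0 < p → 0 < q → IntervalIntegrable F volume p q := by
    intro p q hp hq
    apply ContinuousOn.intervalIntegrable
    intro x hx
    refine ((hFc x ?_).continuousWithinAt)
    exact lt_of_lt_of_le (lt_min hp hq) (by simpa using hx.1)
  have huIcc : Set.uIcc s t = Set.Icc s t := Set.uIcc_of_le hst
  have hycont : ContinuousOn y (Set.Icc s t) := fun u hu =>
    ((hyd u (huIcc ▸ hu)).continuousAt).continuousWithinAt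
  have hymono' : MonotoneOn y (Set.Icc s t) := by
    apply monotoneOn_of_deriv_nonneg (convex_Icc s t) hycont
    · intro x hx
      rw [interior_Icc] at hx
      exact ((hyd x (huIcc ▸ Set.Ioo_subset_Icc_self hx)).differentiableAt).differentiableWithinAt
    · intro x hx
      rw [interior_Icc] at hx
      rw [(hyd x (huIcc ▸ Set.Ioo_subset_Icc_self hx)).deriv]
      exact hgpos x (huIcc ▸ Set.Ioo_subset_Icc_self hx)
  have hyval : ∀ u ∈ Set.Icc s t, y s ≤ y u ∧ y u ≤ y t := fun u hu =>
    ⟨hymono' ⟨le_rfl, hst⟩ hu hu.1, hymono' hu ⟨hst, le_rfl⟩ hu.2⟩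
  have hypos' : ∀ u ∈ Set.Icc s t, 0 < y u := fun u hu => lt_of_lt_of_le hys (hyval u hu).1
  have hyst : y s ≤ y t := (hyval t ⟨hst, le_rfl⟩).1
  have himg : y '' Set.uIcc s t ⊆ Set.Icc (y s) (y t) := by
    rintro - ⟨u, hu, rfl⟩
    exact hyval u (huIcc ▸ hu)
  have hfy_mono : MonotoneOn (fun u => f (y u)) (Set.uIcc s t) := by
    rw [huIcc]
    intro u hu v hv huv
    exact hfmono (Set.mem_Ici.2 (hypos' u hu).le) (Set.mem_Ici.2 (hypos' v hv).le)
      (hymono' hu hv huv)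
  have hRint : IntervalIntegrable (fun u => g u * f (y u)) volume s t :=
    (hfy_mono.intervalIntegrable).continuousOn_mul hg
  apply le_of_tendsto ((Flim' hFc (hypos' t ⟨hst, le_rfl⟩)).sub (Flim' hFc hys))
  filter_upwards [Ioo_mem_nhdsGT_of_mem (Set.left_mem_Ico.2 hys)] with h hh
  obtain ⟨h0, hhy⟩ := hh
  have hFsh_at : ∀ x : ℝ, 0 < x - h → ContinuousAt (fun z => F (z - h)) x := by
    intro x hx
    have h1 : ContinuousAt (fun z : ℝ => z - h) x := (continuous_id.sub continuous_const).continuousAt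
    exact ContinuousAt.comp (f := fun z : ℝ => z - h) (g := F) (hFc (x - h) hx) h1
  set fh : ℝ → ℝ := fun x => (F x - F (x - h)) / h with hfh_def
  have hfh_cont : ContinuousOn fh (Set.Icc (y s) (y t)) := by
    intro x hx
    have hx0 : 0 < x := lt_of_lt_of_le hys hx.1
    have hxh : 0 < x - h := by
      have := hx.1; linarith
    exact (((hFc x hx0).sub (hFsh_at x hxh)).div_const h).continuousWithinAt
  have hfh_le : ∀ x ∈ Set.Icc (y s) (y t), fh x ≤ f x := by
    intro x hx
    have hxh : (0:ℝ) ≤ x - h := by have := hx.1; linarith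
    have := Fub' hfmono hF hxh (by linarith : x - h ≤ x)
    rw [hfh_def]
    rw [div_le_iff₀ h0]
    calc F x - F (x - h) ≤ f x * (x - (x - h)) := this
    _ = f x * h := by ring
  have step1 : (∫ u in s..t, g u * fh (y u)) = ∫ x in (y s)..(y t), fh x := by
    have := intervalIntegral.integral_comp_smul_deriv' hyd hg (hfh_cont.mono himg)
    simpa [smul_eq_mul, Function.comp] using this
  have step2 : (∫ x in (y s)..(y t), fh x) =
      (∫ x in (y t - h)..(y t), F x) / h - (∫ x in (y s - h)..(y s), F x) / h := by
    have hys' : 0 < y s - h := by linarith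
    have hyt' : 0 < y t - h := by linarith
    have hFs : ContinuousOn F (Set.uIcc (y s) (y t)) := by
      intro x hx
      refine (hFc x ?_).continuousWithinAt
      rw [Set.uIcc_of_le hyst] at hx
      exact lt_of_lt_of_le hys hx.1
    have hFsh : ContinuousOn (fun x => F (x - h)) (Set.uIcc (y s) (y t)) := by
      intro x hx
      rw [Set.uIcc_of_le hyst] at hx
      have hxh2 : 0 < x - h := by have := hx.1; linarith
      exact (hFsh_at x hxh2).continuousWithinAt
    have hsubeq : (∫ x in (y s)..(y t), fh x)
        = ((∫ x in (y s)..(y t), F x) - ∫ x in (y s)..(y t), F (x - h)) / h := by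
      rw [← intervalIntegral.integral_sub hFs.intervalIntegrable hFsh.intervalIntegrable]
      rw [hfh_def, intervalIntegral.integral_div]
    rw [hsubeq, intervalIntegral.integral_comp_sub_right (fun x => F x) h]
    have e1 : (∫ x in (y s - h)..(y s), F x) + (∫ x in (y s)..(y t), F x)
        = ∫ x in (y s - h)..(y t), F x :=
      intervalIntegral.integral_add_adjacent_intervals (hFI hys' hys) (hFI hys (hypos' t ⟨hst, le_rfl⟩))
    have e2 : (∫ x in (y s - h)..(y t - h), F x) + (∫ x in (y t - h)..(y t), F x)
        = ∫ x in (y s - h)..(y t), F x :=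
      intervalIntegral.integral_add_adjacent_intervals (hFI hys' hyt') (hFI hyt' (hypos' t ⟨hst, le_rfl⟩))
    have := e1.trans e2.symm
    field_simp
    linarith
  have step3 : (∫ u in s..t, g u * fh (y u)) ≤ ∫ u in s..t, g u * f (y u) := by
    apply intervalIntegral.integral_mono_on hst _ hRint
    · intro u hu
      have hyu : y u ∈ Set.Icc (y s) (y t) := hyval u hu
      exact mul_le_mul_of_nonneg_left (hfh_le (y u) hyu) (hgpos u (huIcc ▸ hu))
    · apply ContinuousOn.intervalIntegrable
      apply hg.mul
      apply (hfh_cont.comp (huIcc ▸ hycont))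
      intro u hu
      exact hyval u (huIcc ▸ hu)
  calc (∫ x in (y t - h)..(y t), F x) / h - (∫ x in (y s - h)..(y s), F x) / h
      = ∫ x in (y s)..(y t), fh x := step2.symm
    _ = ∫ u in s..t, g u * fh (y u) := step1.symm
    _ ≤ ∫ u in s..t, g u * f (y u) := step3

end Aux

section Main
open intervalIntegral Set

/-- Lemma A.4, smooth case: a nonnegative nondecreasing `C²` subsolution of
`y'' + ((N−1)/r) y' = f(y)` on a neighborhood of `[r₀, r₁]` with `F(y r₀) > 0` satisfies
`∫_{y r₀}^{y r₁} du/√(2(F u − F(y r₀))) ≥ (r₀/(N−2)) (1 − r₀^{N−2}/r₁^{N−2})`. -/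
theorem stmt_9 (N : ℕ) (hN : 3 ≤ N)
    (f : ℝ → ℝ) (hfpos : ∀ t, 0 ≤ t → 0 ≤ f t) (hfmono : MonotoneOn f (Set.Ici 0))
    (F : ℝ → ℝ) (hF : ∀ t, F t = ∫ s in (0:ℝ)..t, f s)
    (r₀ r₁ : ℝ) (hr₀ : 0 < r₀) (hr₀r₁ : r₀ < r₁)
    (y : ℝ → ℝ) (U : Set ℝ) (hU : IsOpen U) (hIcc : Set.Icc r₀ r₁ ⊆ U)
    (hreg : ContDiffOn ℝ 2 y U)
    (hypos : ∀ r ∈ U, 0 ≤ y r) (hymono : MonotoneOn y U)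
    (hsub : ∀ r ∈ Set.Icc r₀ r₁,
      f (y r) ≤ deriv (deriv y) r + (((N : ℝ) - 1) / r) * deriv y r)
    (hF0 : 0 < F (y r₀)) :
    ENNReal.ofReal ((r₀ / ((N : ℝ) - 2)) * (1 - r₀ ^ (N - 2) / r₁ ^ (N - 2))) ≤
      ∫⁻ u in Set.Ioc (y r₀) (y r₁),
        ENNReal.ofReal (1 / Real.sqrt (2 * (F u - F (y r₀)))) := by
  obtain ⟨m, rfl⟩ : ∃ m, N = m + 3 := ⟨N - 3, by omega⟩
  set K := m + 2 with hK
  set a := y r₀ with ha_def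
  set b := y r₁ with hb_def
  have hr₁ : 0 < r₁ := hr₀.trans hr₀r₁
  have hr₀U : r₀ ∈ U := hIcc ⟨le_rfl, hr₀r₁.le⟩
  have hr₁U : r₁ ∈ U := hIcc ⟨hr₀r₁.le, le_rfl⟩
  have ha0 : 0 ≤ a := hypos r₀ hr₀U
  -- a > 0
  have ha : 0 < a := by
    rcases ha0.lt_or_eq with h | h
    · exact h
    · exfalso
      have : F a = 0 := by rw [← h, hF 0, intervalIntegral.integral_same]
      linarith
  -- f a > 0
  have hfa : 0 < f a := by
    by_contra hle
    push_neg at hle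
    have hzero : ∀ s ∈ Set.uIcc (0:ℝ) a, f s = 0 := by
      intro s hs
      rw [Set.uIcc_of_le ha0] at hs
      exact le_antisymm ((hfmono (Set.mem_Ici.2 hs.1) (Set.mem_Ici.2 ha0) hs.2).trans hle)
        (hfpos s hs.1)
    have : F a = 0 := by
      rw [hF a, intervalIntegral.integral_congr hzero]
      simp
    linarith
  -- regularity facts
  have hy1 : ∀ u ∈ U, HasDerivAt y (deriv y u) u := by
    intro u hu
    have : DifferentiableAt ℝ y u :=
      (hreg.differentiableOn two_ne_zero).differentiableAt (hU.mem_nhds hu)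
    exact this.hasDerivAt
  have hdy : ContDiffOn ℝ 1 (deriv y) U := hreg.deriv_of_isOpen hU (by norm_num)
  have hy2 : ∀ u ∈ U, HasDerivAt (deriv y) (deriv (deriv y) u) u := by
    intro u hu
    have : DifferentiableAt ℝ (deriv y) u :=
      (hdy.differentiableOn one_ne_zero).differentiableAt (hU.mem_nhds hu)
    exact this.hasDerivAt
  have hdycont : ContinuousOn (deriv y) U := hdy.continuousOn
  have hddycont : ContinuousOn (deriv (deriv y)) U :=
    hdy.continuousOn_deriv_of_isOpen hU le_rfl
  have hyc : ContinuousOn y U := hreg.continuousOn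
  -- deriv y nonneg on U
  have hdpos : ∀ u ∈ U, 0 ≤ deriv y u := by
    intro u hu
    have hslope := hasDerivAt_iff_tendsto_slope.mp (hy1 u hu)
    refine ge_of_tendsto hslope ?_
    filter_upwards [mem_nhdsWithin_of_mem_nhds (hU.mem_nhds hu), self_mem_nhdsWithin]
      with v hvU hvne
    rw [slope_def_field]
    rcases lt_or_gt_of_ne (hvne : v ≠ u) with h | h
    · apply div_nonneg_of_nonpos
      · simpa using sub_nonpos.2 (hymono hvU hu h.le)
      · linarith
    · apply div_nonneg
      · simpa using sub_nonneg.2 (hymono hu hvU h.le)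
      · linarith
  -- strict growth beyond r₀
  have hygt : ∀ r ∈ Set.Icc r₀ r₁, r₀ < r → a < y r := by
    intro r hr hrr
    by_contra hle
    push_neg at hle
    have hflat : ∀ s ∈ Set.Icc r₀ r, y s = a := by
      intro s hs
      have h1 : a ≤ y s := hymono hr₀U (hIcc ⟨hs.1, hs.2.trans hr.2⟩) hs.1
      have h2 : y s ≤ y r := hymono (hIcc ⟨hs.1, hs.2.trans hr.2⟩) (hIcc hr) hs.2
      linarith
    set s₀ := (r₀ + r) / 2 with hs₀
    have hs₀mem : s₀ ∈ Set.Ioo r₀ r := ⟨by linarith, by linarith⟩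
    have hopen : Set.Ioo r₀ r ∈ nhds s₀ := (isOpen_Ioo).mem_nhds hs₀mem
    have hder0 : ∀ x ∈ Set.Ioo r₀ r, deriv y x = 0 := by
      intro x hx
      have hev : y =ᶠ[nhds x] fun _ => a := by
        filter_upwards [isOpen_Ioo.mem_nhds hx] with z hz
        exact hflat z (Set.Ioo_subset_Icc_self hz)
      rw [hev.deriv_eq, deriv_const]
    have hdd0 : deriv (deriv y) s₀ = 0 := by
      have hev : deriv y =ᶠ[nhds s₀] fun _ => 0 := by
        filter_upwards [hopen] with z hz
        exact hder0 z hz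
      rw [hev.deriv_eq, deriv_const]
    have hs₀Icc : s₀ ∈ Set.Icc r₀ r₁ := ⟨hs₀mem.1.le, (hs₀mem.2.le.trans hr.2)⟩
    have := hsub s₀ hs₀Icc
    rw [hdd0, hder0 s₀ hs₀mem, hflat s₀ (Set.Ioo_subset_Icc_self hs₀mem)] at this
    simp at this
    linarith
  -- energy function
  set w : ℝ → ℝ := fun u => u ^ K * deriv y u with hw_def
  set w' : ℝ → ℝ := fun u =>
    (K : ℝ) * u ^ (m + 1) * deriv y u + u ^ K * deriv (deriv y) u with hw'_def
  have hw : ∀ u ∈ U, HasDerivAt w (w' u) u := by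
    intro u hu
    have := (hasDerivAt_pow K u).mul (hy2 u hu)
    refine this.congr_deriv ?_
    rw [show K - 1 = m + 1 by omega]
  set E : ℝ → ℝ := fun u => w u ^ 2 / 2 with hE_def
  have hE : ∀ u ∈ U, HasDerivAt E (w u * w' u) u := by
    intro u hu
    have := ((hw u hu).pow 2).div_const 2
    refine this.congr_deriv ?_
    ring
  have hwnn : ∀ u ∈ U, 0 < u → 0 ≤ w u := by
    intro u hu hu0
    exact mul_nonneg (by positivity) (hdpos u hu)
  -- key energy estimate
  have key : ∀ r ∈ Set.Icc r₀ r₁, (r₀ ^ K) ^ 2 * (F (y r) - F a) ≤ w r ^ 2 / 2 := by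
    intro r hr
    have hsubU : Set.uIcc r₀ r ⊆ U := by
      rw [Set.uIcc_of_le hr.1]
      exact fun x hx => hIcc ⟨hx.1, hx.2.trans hr.2⟩
    have hE'cont : ContinuousOn (fun u => w u * w' u) (Set.uIcc r₀ r) := by
      have c1 : ContinuousOn w U := (continuous_pow K).continuousOn.mul hdycont
      have c2 : ContinuousOn w' U :=
        ((continuous_const.mul (continuous_pow (m+1))).continuousOn.mul hdycont).add
          ((continuous_pow K).continuousOn.mul hddycont)
      exact (c1.mul c2).mono hsubU
    have e0 : ∫ u in r₀..r, w u * w' u = E r - E r₀ :=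
      intervalIntegral.integral_eq_sub_of_hasDerivAt
        (fun x hx => hE x (hsubU hx)) hE'cont.intervalIntegrable
    have hfyint : IntervalIntegrable (fun u => deriv y u * f (y u)) volume r₀ r := by
      have hmono2 : MonotoneOn (fun u => f (y u)) (Set.uIcc r₀ r) := by
        intro p hp q hq hpq
        exact hfmono (Set.mem_Ici.2 (hypos p (hsubU hp))) (Set.mem_Ici.2 (hypos q (hsubU hq)))
          (hymono (hsubU hp) (hsubU hq) hpq)
      exact hmono2.intervalIntegrable.continuousOn_mul (hdycont.mono hsubU)
    have cmp : (∫ u in r₀..r, (r₀ ^ K) ^ 2 * (deriv y u * f (y u)))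
        ≤ ∫ u in r₀..r, w u * w' u := by
      apply intervalIntegral.integral_mono_on hr.1 (hfyint.const_mul _)
        hE'cont.intervalIntegrable
      intro u hu
      have huU : u ∈ U := hsubU (by rw [Set.uIcc_of_le hr.1]; exact hu)
      have hu0 : 0 < u := hr₀.trans_le hu.1
      have hdyu : 0 ≤ deriv y u := hdpos u huU
      have hfyu : 0 ≤ f (y u) := hfpos _ (hypos u huU)
      have hs := hsub u ⟨hu.1, hu.2.trans hr.2⟩
      have hcast : ((m+3:ℕ):ℝ) - 1 = (K:ℝ) := by push_cast [hK]; ring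
      rw [hcast] at hs
      have hA : u ^ K * f (y u)
          ≤ (K:ℝ) * u ^ (m+1) * deriv y u + u ^ K * deriv (deriv y) u := by
        have h2 : u ^ K * f (y u)
            ≤ u ^ K * (deriv (deriv y) u + (K:ℝ) / u * deriv y u) :=
          mul_le_mul_of_nonneg_left hs (by positivity)
        have h3 : u ^ K * ((K:ℝ) / u * deriv y u) = (K:ℝ) * u ^ (m+1) * deriv y u := by
          rw [hK, pow_succ]
          field_simp
        rw [mul_add, h3] at h2
        linarith
      have hwu : 0 ≤ w u := mul_nonneg (by positivity) hdyu
      have hp : (r₀ ^ K) ^ 2 ≤ (u ^ K) ^ 2 :=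
        pow_le_pow_left₀ (pow_nonneg hr₀.le K) (pow_le_pow_left₀ hr₀.le hu.1 K) 2
      calc (r₀ ^ K) ^ 2 * (deriv y u * f (y u))
          ≤ (u ^ K) ^ 2 * (deriv y u * f (y u)) :=
            mul_le_mul_of_nonneg_right hp (mul_nonneg hdyu hfyu)
        _ = (u ^ K * deriv y u) * (u ^ K * f (y u)) := by ring
        _ ≤ (u ^ K * deriv y u) *
              ((K:ℝ) * u ^ (m+1) * deriv y u + u ^ K * deriv (deriv y) u) :=
            mul_le_mul_of_nonneg_left hA hwu
        _ = w u * w' u := rfl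
    have hmoll : F (y r) - F a ≤ ∫ u in r₀..r, deriv y u * f (y u) :=
      moll' hfpos hfmono hF hr.1 ha (fun u hu => hy1 u (hsubU hu)) (hdycont.mono hsubU)
        (fun u hu => hdpos u (hsubU hu))
    have hconst : (∫ u in r₀..r, (r₀ ^ K) ^ 2 * (deriv y u * f (y u)))
        = (r₀ ^ K) ^ 2 * ∫ u in r₀..r, deriv y u * f (y u) :=
      intervalIntegral.integral_const_mul _ _
    have hE0 : 0 ≤ E r₀ := by
      show 0 ≤ w r₀ ^ 2 / 2
      positivity
    have hmul : (r₀ ^ K) ^ 2 * (F (y r) - F a)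
        ≤ (r₀ ^ K) ^ 2 * ∫ u in r₀..r, deriv y u * f (y u) :=
      mul_le_mul_of_nonneg_left hmoll (by positivity)
    have hEr : E r = w r ^ 2 / 2 := rfl
    rw [← hEr]
    calc (r₀ ^ K) ^ 2 * (F (y r) - F a)
        ≤ (r₀ ^ K) ^ 2 * ∫ u in r₀..r, deriv y u * f (y u) := hmul
      _ = ∫ u in r₀..r, (r₀ ^ K) ^ 2 * (deriv y u * f (y u)) := hconst.symm
      _ ≤ ∫ u in r₀..r, w u * w' u := cmp
      _ = E r - E r₀ := e0
      _ ≤ E r := by linarith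
  -- pointwise lower bound on deriv y
  have hkey2 : ∀ r ∈ Set.Icc r₀ r₁,
      r₀ ^ K * Real.sqrt (2 * (F (y r) - F a)) ≤ r ^ K * deriv y r := by
    intro r hr
    have hk := key r hr
    have hwr : 0 ≤ w r := hwnn r (hIcc hr) (hr₀.trans_le hr.1)
    have h1 : (r₀ ^ K) ^ 2 * (2 * (F (y r) - F a)) ≤ w r ^ 2 := by nlinarith
    calc r₀ ^ K * Real.sqrt (2 * (F (y r) - F a))
        = Real.sqrt ((r₀ ^ K) ^ 2 * (2 * (F (y r) - F a))) := by
          rw [Real.sqrt_mul (sq_nonneg _), Real.sqrt_sq (by positivity)]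
      _ ≤ Real.sqrt (w r ^ 2) := Real.sqrt_le_sqrt h1
      _ = w r := by rw [Real.sqrt_sq hwr]
  -- phi and psi
  have hFc : ∀ x : ℝ, 0 < x → ContinuousAt F x := fun x hx => FcontAt' hfpos hfmono hF hx
  set φ : ℝ → ℝ := fun u => 1 / Real.sqrt (2 * (F u - F a)) with hφ_def
  have hφnn : ∀ u, 0 ≤ φ u := fun u => one_div_nonneg.2 (Real.sqrt_nonneg _)
  have hΔ : ∀ u, a < u → 0 < F u - F a := by
    intro u hu
    have := Flb' hfmono hF ha0 hu.le
    nlinarith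
  have hb' : a < b := hygt r₁ ⟨hr₀r₁.le, le_rfl⟩ hr₀r₁
  have hab : a ≤ b := hb'.le
  have hφcontAt : ∀ u, a < u → ContinuousAt φ u := by
    intro u hu
    have hu0 : 0 < u := ha.trans hu
    have hin : ContinuousAt (fun v => 2 * (F v - F a)) u :=
      continuousAt_const.mul ((hFc u hu0).sub continuousAt_const)
    have hden : ContinuousAt (fun v => Real.sqrt (2 * (F v - F a))) u :=
      ContinuousAt.comp (f := fun v => 2 * (F v - F a)) (g := Real.sqrt)
        Real.continuous_sqrt.continuousAt hin
    exact continuousAt_const.div hden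
      (Real.sqrt_pos.2 (by have := hΔ u hu; linarith)).ne'
  have hφcont : ContinuousOn φ (Set.Ioi a) := fun u hu => (hφcontAt u hu).continuousWithinAt
  have hφIntOn : IntegrableOn φ (Set.Ioc a b) volume := by
    have hgint : IntervalIntegrable
        (fun u => (1 / Real.sqrt (2 * f a)) * (u - a) ^ (-(1/2) : ℝ)) volume a b := by
      have h0 : IntervalIntegrable (fun x : ℝ => x ^ (-(1/2):ℝ)) volume 0 (b - a) :=
        intervalIntegral.intervalIntegrable_rpow' (by norm_num)
      have h1 := h0.comp_sub_right a
      rw [zero_add, sub_add_cancel] at h1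
      exact h1.const_mul _
    rw [intervalIntegrable_iff, Set.uIoc_of_le hab] at hgint
    apply Integrable.mono' hgint
      ((hφcont.mono Set.Ioc_subset_Ioi_self).aestronglyMeasurable measurableSet_Ioc)
    filter_upwards [ae_restrict_mem measurableSet_Ioc] with u hu
    rw [Real.norm_eq_abs, abs_of_nonneg (hφnn u)]
    have hua : 0 < u - a := sub_pos.2 hu.1
    have hflb : f a * (u - a) ≤ F u - F a := Flb' hfmono hF ha0 hu.1.le
    have hsq : Real.sqrt (2 * (f a * (u - a))) ≤ Real.sqrt (2 * (F u - F a)) :=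
      Real.sqrt_le_sqrt (by linarith)
    have hrpos : 0 < Real.sqrt (2 * (f a * (u - a))) := Real.sqrt_pos.2 (by positivity)
    have h5 : φ u ≤ 1 / Real.sqrt (2 * (f a * (u - a))) :=
      one_div_le_one_div_of_le hrpos hsq
    calc φ u ≤ 1 / Real.sqrt (2 * (f a * (u - a))) := h5
      _ = (1 / Real.sqrt (2 * f a)) * (u - a) ^ (-(1/2) : ℝ) := by
          rw [show 2 * (f a * (u - a)) = (2 * f a) * (u - a) by ring,
            Real.sqrt_mul (by positivity), Real.rpow_neg hua.le, ← Real.sqrt_eq_rpow,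
            one_div, mul_inv, one_div]
  have hφint : IntervalIntegrable φ volume a b := by
    rw [intervalIntegrable_iff, Set.uIoc_of_le hab]
    exact hφIntOn
  set ψ : ℝ → ℝ := fun u => ∫ x in a..u, φ x with hψ_def
  have hψcont : ContinuousOn ψ (Set.Icc a b) := by
    have := intervalIntegral.continuousOn_primitive_interval' hφint Set.left_mem_uIcc
    rwa [Set.uIcc_of_le hab] at this
  have hψd : ∀ u, a < u → u ≤ b → HasDerivAt ψ (φ u) u := by
    intro u hu hub
    apply intervalIntegral.integral_hasDerivAt_right
      (hφint.mono_set (Set.uIcc_subset_uIcc Set.left_mem_uIcc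
        (by rw [Set.uIcc_of_le hab]; exact ⟨hu.le.trans le_rfl, hub⟩)))
      (ContinuousOn.stronglyMeasurableAtFilter isOpen_Ioi hφcont u hu)
      (hφcontAt u hu)
  set P : ℝ → ℝ := fun r => (r₀ / ((m:ℝ)+1)) * (1 - r₀^(m+1) / r^(m+1)) with hP_def
  have hPd : ∀ r : ℝ, 0 < r → HasDerivAt P (r₀^K / r^K) r := by
    intro r hr
    have h1 : HasDerivAt (fun r : ℝ => r ^ (m+1)) (((m+1:ℕ):ℝ) * r^m) r := by
      simpa using hasDerivAt_pow (m+1) r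
    have h2 := h1.inv (pow_ne_zero _ hr.ne')
    have h3 := ((h2.const_mul (r₀^(m+1))).const_sub 1).const_mul (r₀ / ((m:ℝ)+1))
    refine h3.congr_deriv ?_
    rw [hK]
    have hrm : r ^ (m+1) ≠ 0 := pow_ne_zero _ hr.ne'
    field_simp
    push_cast
    ring
  set G : ℝ → ℝ := fun r => ψ (y r) - P r with hG_def
  have hymaps : ∀ r ∈ Set.Icc r₀ r₁, y r ∈ Set.Icc a b := fun r hr =>
    ⟨hymono hr₀U (hIcc hr) hr.1, hymono (hIcc hr) hr₁U hr.2⟩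
  have hGd : ∀ r ∈ Set.Ioo r₀ r₁, HasDerivAt G (φ (y r) * deriv y r - r₀^K / r^K) r := by
    intro r hr
    have hrIcc : r ∈ Set.Icc r₀ r₁ := Set.Ioo_subset_Icc_self hr
    have hyr : a < y r := hygt r hrIcc hr.1
    have hyrb : y r ≤ b := (hymaps r hrIcc).2
    have hd1 := (hψd (y r) hyr hyrb).comp r (hy1 r (hIcc hrIcc))
    exact hd1.sub (hPd r (hr₀.trans hr.1))
  have hGmono : MonotoneOn G (Set.Icc r₀ r₁) := by
    apply monotoneOn_of_deriv_nonneg (convex_Icc r₀ r₁)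
    · apply ContinuousOn.sub
      · exact hψcont.comp (hyc.mono hIcc) hymaps
      · intro r hr
        exact ((hPd r (hr₀.trans_le hr.1)).continuousAt).continuousWithinAt
    · intro r hr
      rw [interior_Icc] at hr
      exact ((hGd r hr).differentiableAt).differentiableWithinAt
    · intro r hr
      rw [interior_Icc] at hr
      rw [(hGd r hr).deriv]
      have hrIcc := Set.Ioo_subset_Icc_self hr
      have hyr : a < y r := hygt r hrIcc hr.1
      have hΔr := hΔ (y r) hyr
      have hsq : 0 < Real.sqrt (2 * (F (y r) - F a)) := Real.sqrt_pos.2 (by linarith)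
      have hk2 := hkey2 r hrIcc
      have hrK : 0 < r ^ K := pow_pos (hr₀.trans hr.1) K
      rw [sub_nonneg]
      have hmul : φ (y r) * deriv y r = deriv y r / Real.sqrt (2 * (F (y r) - F a)) := by
        rw [hφ_def]; ring
      rw [hmul, div_le_div_iff₀ hrK hsq]
      nlinarith [hk2]
  have hG : G r₀ ≤ G r₁ := hGmono ⟨le_rfl, hr₀r₁.le⟩ ⟨hr₀r₁.le, le_rfl⟩ hr₀r₁.le
  have hGr₀ : G r₀ = 0 := by
    show ψ (y r₀) - P r₀ = 0
    have h1 : ψ a = 0 := intervalIntegral.integral_same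
    have h2 : P r₀ = 0 := by
      show (r₀ / ((m:ℝ)+1)) * (1 - r₀^(m+1) / r₀^(m+1)) = 0
      rw [div_self (pow_ne_zero _ hr₀.ne')]
      ring
    rw [← ha_def, h1, h2, sub_zero]
  have hfinal : P r₁ ≤ ψ b := by
    have h4 : G r₁ = ψ b - P r₁ := rfl
    rw [hGr₀] at hG
    rw [h4] at hG
    linarith
  have hc : ((m+3:ℕ):ℝ) - 2 = (m:ℝ) + 1 := by push_cast; ring
  have hn : m + 3 - 2 = m + 1 := by omega
  calc ENNReal.ofReal ((r₀ / (((m+3:ℕ) : ℝ) - 2)) * (1 - r₀ ^ (m + 3 - 2) / r₁ ^ (m + 3 - 2)))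
      = ENNReal.ofReal (P r₁) := by rw [hc, hn]
    _ ≤ ENNReal.ofReal (ψ b) := ENNReal.ofReal_le_ofReal hfinal
    _ = ENNReal.ofReal (∫ u in Set.Ioc a b, φ u) := by
        rw [hψ_def]
        simp only []
        rw [intervalIntegral.integral_of_le hab]
    _ = ∫⁻ u in Set.Ioc a b, ENNReal.ofReal (φ u) := by
        exact ofReal_integral_eq_lintegral_ofReal hφIntOn
          (Filter.Eventually.of_forall hφnn)
    _ = ∫⁻ u in Set.Ioc a b, ENNReal.ofReal (1 / Real.sqrt (2 * (F u - F a))) := rfl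


end Main
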